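/- Let X and Y be compact Hausdorff spaces and let M = Lsc_b(Y)^{++} be the partially ordered abelian semigroup of bounded, strictly positive, lower semicontinuous functions Y → ℝ with pointwise order and addition, with the compact containment relation ≪ defined via increasing sequences. If f : X → M satisfies that {x ∈ X : g ≪ f(x)} is open in X for every g ∈ M, then the map f̃ : X × Y → ℝ defined by f̃(x,y) = f(x)(y) is lower semicontinuous. -/

import Mathlib

noncomputable section

set_option maxHeartbeats 1000000

/-- `a` is compactly contained in `b`: for every increasing sequence having a supremum
which dominates `b`, some term already dominates `a`. -/
def CompactlyContained {M : Type*} [Preorder M] (a b : M) : Prop :=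
  ∀ c : ℕ → M, Monotone c → ∀ s : M, IsLUB (Set.range c) s → b ≤ s → ∃ n, a ≤ c n

/-- The Riesz interpolation property. -/
def RieszInterpolation (M : Type*) [Preorder M] : Prop :=
  ∀ a₁ a₂ b₁ b₂ : M, a₁ ≤ b₁ → a₁ ≤ b₂ → a₂ ≤ b₁ → a₂ ≤ b₂ →
    ∃ c : M, a₁ ≤ c ∧ a₂ ≤ c ∧ c ≤ b₁ ∧ c ≤ b₂

/-- The partially ordered abelian semigroup `Lsc_b(Y)^{++}` of bounded, strictly
positive, lower semicontinuous real functions on `Y`, with pointwise order. -/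
def Lscb (Y : Type*) [TopologicalSpace Y] : Type _ :=
  {g : Y → ℝ // LowerSemicontinuous g ∧ (∀ y, 0 < g y) ∧ ∃ C : ℝ, ∀ y, g y ≤ C}

instance (Y : Type*) [TopologicalSpace Y] : PartialOrder (Lscb Y) :=
  Subtype.partialOrder _

/-- `≤` in `Lscb` is pointwise. -/
lemma Lscb.le_iff {Y : Type*} [TopologicalSpace Y] (a b : Lscb Y) :
    a ≤ b ↔ ∀ y, a.1 y ≤ b.1 y := Iff.rfl

/-- Compact containment implies order. -/
lemma le_of_cc {M : Type*} [Preorder M] {a b : M} (h : CompactlyContained a b) : a ≤ b := by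
  obtain ⟨n, hn⟩ := h (fun _ => b) monotone_const b
    (by rw [Set.range_const]; exact isLUB_singleton) le_rfl
  exact hn

/-- A continuous function strictly below `h` is compactly contained in `h` in `Lscb Y`
when `Y` is compact. -/
lemma cc_of_continuous_lt {Y : Type*} [TopologicalSpace Y] [CompactSpace Y]
    (g h : Lscb Y) (hgc : Continuous g.1) (hlt : ∀ y, g.1 y < h.1 y) :
    CompactlyContained g h := by
  intro c hc s hs hle
  obtain ⟨C, hC⟩ := s.2.2.2
  have hub : ∀ n, c n ≤ s := fun n => hs.1 (Set.mem_range_self n)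
  have hbdd : ∀ y, BddAbove (Set.range fun n => (c n).1 y) := by
    intro y
    exact ⟨C, by rintro _ ⟨n, rfl⟩; exact le_trans (hub n y) (hC y)⟩
  -- the pointwise supremum as an element of Lscb Y
  have hσlt : ∀ y : Y, ∀ a : ℝ, a < ⨆ n, (c n).1 y ↔ ∃ n, a < (c n).1 y := by
    intro y a
    exact lt_ciSup_iff (hbdd y)
  set σf : Y → ℝ := fun y => ⨆ n, (c n).1 y with hσf
  have hσlsc : LowerSemicontinuous σf := by
    intro y a ha
    replace ha := (hσlt y a).1 ha
    obtain ⟨n, hn⟩ := ha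
    filter_upwards [(c n).2.1 y a hn] with z hz
    exact (hσlt z a).2 ⟨n, hz⟩
  have hσpos : ∀ y, 0 < σf y := fun y =>
    lt_of_lt_of_le ((c 0).2.2.1 y) (le_ciSup (hbdd y) 0)
  have hσbdd : ∀ y, σf y ≤ C := by
    intro y
    exact ciSup_le fun n => le_trans (hub n y) (hC y)
  set σ : Lscb Y := ⟨σf, hσlsc, hσpos, C, hσbdd⟩ with hσ
  have hsσ : s ≤ σ := hs.2 (by rintro _ ⟨n, rfl⟩; exact fun y => le_ciSup (hbdd y) n)
  -- for each y some n exceeds g y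
  have key : ∀ y, ∃ n, g.1 y < (c n).1 y := by
    intro y
    exact (hσlt y (g.1 y)).1 (lt_of_lt_of_le (hlt y) (le_trans (hle y) (hsσ y)))
  -- open cover argument
  set U : ℕ → Set Y := fun n => {y | g.1 y < (c n).1 y} with hU
  have hUopen : ∀ n, IsOpen (U n) := by
    intro n
    have hl : LowerSemicontinuous fun y => (c n).1 y + (-(g.1 y)) :=
      (c n).2.1.add (hgc.neg.lowerSemicontinuous)
    have ho := hl.isOpen_preimage 0
    have heq : U n = (fun y => (c n).1 y + -(g.1 y)) ⁻¹' Set.Ioi 0 := by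
      ext y
      simp only [hU, Set.mem_setOf_eq, Set.mem_preimage, Set.mem_Ioi]
      constructor <;> intro h' <;> linarith
    rw [heq]
    exact ho
  have hcover : Set.univ ⊆ ⋃ n, U n := by
    intro y _
    obtain ⟨n, hn⟩ := key y
    exact Set.mem_iUnion.2 ⟨n, hn⟩
  obtain ⟨t, ht⟩ := isCompact_univ.elim_finite_subcover U hUopen hcover
  rcases t.eq_empty_or_nonempty with rfl | hne
  · simp only [Finset.notMem_empty, Set.iUnion_of_empty, Set.iUnion_empty,
      Set.subset_empty_iff, Set.univ_eq_empty_iff] at ht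
    exact ⟨0, fun y => (ht.false y).elim⟩
  · obtain ⟨N, hN⟩ := t.exists_max_image id hne
    refine ⟨N, fun y => ?_⟩
    have hy := ht (Set.mem_univ y)
    rw [Set.mem_iUnion₂] at hy
    obtain ⟨n, hnt, hny⟩ := hy
    exact le_of_lt (lt_of_lt_of_le hny (hc (hN.2 n hnt) y))

theorem stmt15 (X Y : Type*) [TopologicalSpace X] [CompactSpace X] [T2Space X]
    [TopologicalSpace Y] [CompactSpace Y] [T2Space Y]
    (f : X → Lscb Y)
    (hf : ∀ g : Lscb Y, IsOpen {x : X | CompactlyContained g (f x)}) :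
    LowerSemicontinuous fun p : X × Y => (f p.1).1 p.2 := by
  rintro ⟨x₀, y₀⟩ α hα
  simp only at hα
  set h := f x₀ with hh
  -- positive lower bound for h on compact Y
  have hm : ∃ m : ℝ, 0 < m ∧ ∀ y, m ≤ h.1 y := by
    set V : ℕ → Set Y := fun n => {y | (1 : ℝ) / (n + 1) < h.1 y} with hV
    have hVopen : ∀ n, IsOpen (V n) := fun n => h.2.1.isOpen_preimage _
    have hVcover : Set.univ ⊆ ⋃ n, V n := by
      intro y _
      obtain ⟨n, hn⟩ := exists_nat_one_div_lt (h.2.2.1 y)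
      exact Set.mem_iUnion.2 ⟨n, hn⟩
    obtain ⟨t, ht⟩ := isCompact_univ.elim_finite_subcover V hVopen hVcover
    rcases t.eq_empty_or_nonempty with rfl | hne
    · exact ⟨1, one_pos, fun y => absurd (ht (Set.mem_univ y)) (by simp)⟩
    · obtain ⟨N, _, hN⟩ := t.exists_max_image id hne
      refine ⟨1 / (N + 1), by positivity, fun y => ?_⟩
      have hy := ht (Set.mem_univ y)
      rw [Set.mem_iUnion₂] at hy
      obtain ⟨n, hnt, hny⟩ := hy
      refine le_trans ?_ (le_of_lt hny)
      apply one_div_le_one_div_of_le (by positivity)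
      have := hN n hnt
      simp only [id] at this
      exact_mod_cast Nat.add_le_add_right this 1
  obtain ⟨m, hm0, hmle⟩ := hm
  -- choose β with max α 0 < β < h y₀
  obtain ⟨β, hβ1, hβ2⟩ := exists_between (max_lt hα (h.2.2.1 y₀))
  have hβpos : 0 < β := lt_of_le_of_lt (le_max_right _ _) hβ1
  have hαβ : α < β := lt_of_le_of_lt (le_max_left _ _) hβ1
  -- Urysohn function
  set W : Set Y := {y | β < h.1 y} with hW
  have hWopen : IsOpen W := h.2.1.isOpen_preimage _
  have hy₀W : y₀ ∈ W := hβ2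
  obtain ⟨φ, hφ0, hφ1, hφ01⟩ := exists_continuous_zero_one_of_isClosed
    hWopen.isClosed_compl isClosed_singleton
    (Set.disjoint_left.2 fun y hy hy' => by
      rw [Set.mem_singleton_iff] at hy'
      exact hy (hy' ▸ hy₀W))
  set ε : ℝ := min m β / 2 with hε
  have hε0 : 0 < ε := by positivity
  have hmin1 : min m β ≤ m := min_le_left _ _
  have hmin2 : min m β ≤ β := min_le_right _ _
  have hmin3 : 0 < min m β := lt_min hm0 hβpos
  have hεm : ε < m := by rw [hε]; linarith
  have hεβ : ε < β := by rw [hε]; linarith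
  set g : Y → ℝ := fun y => ε + (β - ε) * φ y with hg
  have hgc : Continuous g := continuous_const.add (continuous_const.mul φ.continuous)
  have hgpos : ∀ y, 0 < g y := by
    intro y
    have := (hφ01 y).1
    have h2 : 0 ≤ (β - ε) * φ y := mul_nonneg (by linarith) this
    simp only [hg]; linarith
  have hgleβ : ∀ y, g y ≤ β := by
    intro y
    have := (hφ01 y).2
    have h2 : (β - ε) * φ y ≤ (β - ε) * 1 := mul_le_mul_of_nonneg_left this (by linarith)
    simp only [hg]; linarith
  have hglt : ∀ y, g y < h.1 y := by
    intro y
    by_cases hyW : y ∈ W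
    · exact lt_of_le_of_lt (hgleβ y) hyW
    · have : φ y = 0 := hφ0 hyW
      have : g y = ε := by simp [hg, this]
      rw [this]
      exact lt_of_lt_of_le hεm (hmle y)
  have hgy₀ : g y₀ = β := by
    have : φ y₀ = 1 := hφ1 rfl
    simp [hg, this]
  set G : Lscb Y := ⟨g, hgc.lowerSemicontinuous, hgpos, β, hgleβ⟩ with hG
  have hGcc : CompactlyContained G h := cc_of_continuous_lt G h hgc hglt
  set U : Set X := {x | CompactlyContained G (f x)} with hUdef
  have hUopen : IsOpen U := hf G
  have hx₀U : x₀ ∈ U := hGcc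
  set V : Set Y := {y | α < g y} with hVdef
  have hVopen : IsOpen V := isOpen_lt continuous_const hgc
  have hy₀V : y₀ ∈ V := by simp only [hVdef, Set.mem_setOf_eq, hgy₀]; exact hαβ
  have hmem : U ×ˢ V ∈ nhds (x₀, y₀) :=
    (hUopen.prod hVopen).mem_nhds ⟨hx₀U, hy₀V⟩
  filter_upwards [hmem] with p hp
  obtain ⟨hpU, hpV⟩ := hp
  have hle : G ≤ f p.1 := le_of_cc hpU
  exact lt_of_lt_of_le hpV (hle p.2)
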